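/- If Δ' is the stellar subdivision of a (d−1)-dimensional simplicial complex Δ at an edge e, then the h-polynomials satisfy h_{Δ'}(t) = h_Δ(t) + t·h_{lk_Δ(e)}(t); equivalently h_i(Δ') = h_i(Δ) + h_{i−1}(lk_Δ(e)) for all i. -/
import Mathlib


open Polynomial Finset

variable {V : Type*} [DecidableEq V]

/-- A (finite, abstract) simplicial complex: contains the empty face and is
closed under taking subsets. -/
def IsSimpComplex (K : Finset (Finset V)) : Prop :=
  ∅ ∈ K ∧ ∀ A ∈ K, ∀ B ⊆ A, B ∈ K

/-- The link of a face `F`: all faces `A` with `A ∪ F ∈ K` and `A ∩ F = ∅`. -/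
def lk (K : Finset (Finset V)) (F : Finset V) : Finset (Finset V) :=
  K.filter fun A => A ∪ F ∈ K ∧ Disjoint A F

/-- The face polynomial `f_K(t) = ∑_{A ∈ K} t^{|A|}` (the empty face contributes 1). -/
noncomputable def fpoly (K : Finset (Finset V)) : Polynomial ℤ :=
  ∑ A ∈ K, Polynomial.X ^ A.card

/-- `∑_{A ∈ K} (t-1)^{d-|A|} = ∑_i f_{i-1}(K) (t-1)^{d-i} = ∑_k h_k(K) t^{d-k}`,
the (descending form of the) h-polynomial of a `(d-1)`-dimensional complex. -/
noncomputable def hpoly (d : ℕ) (K : Finset (Finset V)) : Polynomial ℤ :=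
  ∑ A ∈ K, (Polynomial.X - 1) ^ (d - A.card)

/-- `faceCount K i = f_{i-1}(K)`, the number of faces of cardinality `i`. -/
def faceCount (K : Finset (Finset V)) (i : ℕ) : ℕ :=
  (K.filter fun A => A.card = i).card

/-- Stellar subdivision at the edge `e` with new vertex `v`:
`Δ' = (Δ ∖ St_Δ(e)) ∪ {A ∪ B : A ∈ ∂e * lk_Δ(e), B ⊆ {v}}`. -/
def stellarSubdiv (K : Finset (Finset V)) (e : Finset V) (v : V) : Finset (Finset V) :=
  K.filter (fun A => ¬ e ⊆ A) ∪
    ((e.powerset.filter (· ≠ e)) ×ˢ lk K e).image (fun p => p.1 ∪ p.2) ∪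
    ((e.powerset.filter (· ≠ e)) ×ˢ lk K e).image (fun p => insert v (p.1 ∪ p.2))

/-- for the stellar subdivision `Δ'` of a `(d−1)`-dimensional complex `Δ`
at an edge `e`, `h_{Δ'}(t) = h_Δ(t) + t·h_{lk_Δ(e)}(t)`, i.e. in descending form
`hpoly d Δ' = hpoly d Δ + X * hpoly (d−2) (lk Δ e)`, equivalently
`h_i(Δ') = h_i(Δ) + h_{i−1}(lk_Δ(e))` for all `i`. -/
theorem stmt2 (Δ : Finset (Finset V)) (e : Finset V) (v : V) (d : ℕ)
    (hΔ : IsSimpComplex Δ) (he : e ∈ Δ) (hcard : e.card = 2) (hd : 2 ≤ d)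
    (hdim : ∀ A ∈ Δ, A.card ≤ d) (hv : ∀ A ∈ Δ, v ∉ A) :
    hpoly d (stellarSubdiv Δ e v) = hpoly d Δ + Polynomial.X * hpoly (d - 2) (lk Δ e) := by
  classical
  obtain ⟨a, b, hab, heab⟩ := Finset.card_eq_two.mp hcard
  have hve : v ∉ e := hv e he
  have hLk : ∀ A ∈ lk Δ e, A ∈ Δ ∧ A ∪ e ∈ Δ ∧ Disjoint A e := by
    intro A hA
    simp only [lk, Finset.mem_filter] at hA
    exact ⟨hA.1, hA.2.1, hA.2.2⟩
  have hLcardU : ∀ A ∈ lk Δ e, (A ∪ e).card = A.card + 2 := by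
    intro A hA
    rw [Finset.card_union_of_disjoint (hLk A hA).2.2, hcard]
  have hLcard : ∀ A ∈ lk Δ e, A.card + 2 ≤ d := by
    intro A hA
    have h1 := hdim _ (hLk A hA).2.1
    have h2 := hLcardU A hA
    omega
  have hvL : ∀ A ∈ lk Δ e, v ∉ A := fun A hA => hv A (hLk A hA).1
  set P := (e.powerset.filter (· ≠ e)) ×ˢ lk Δ e with hP
  have hPmem : ∀ p ∈ P, p.1 ⊆ e ∧ p.1 ≠ e ∧ p.2 ∈ lk Δ e := by
    intro p hp
    simp only [hP, Finset.mem_product, Finset.mem_filter, Finset.mem_powerset] at hp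
    exact ⟨hp.1.1, hp.1.2, hp.2⟩
  have hkey : ∀ p ∈ P, ∀ q ∈ P, p.1 ∪ p.2 = q.1 ∪ q.2 → p = q := by
    intro p hp q hq h
    obtain ⟨hp1, -, hp2⟩ := hPmem p hp
    obtain ⟨hq1, -, hq2⟩ := hPmem q hq
    have d1 := (hLk _ hp2).2.2
    have d2 := (hLk _ hq2).2.2
    have e1 : ∀ (s t : Finset V), s ⊆ e → Disjoint t e → (s ∪ t) ∩ e = s := by
      intro s t hs ht
      rw [Finset.union_inter_distrib_right, Finset.inter_eq_left.mpr hs,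
        Finset.disjoint_iff_inter_eq_empty.mp ht, Finset.union_empty]
    have e2 : ∀ (s t : Finset V), s ⊆ e → Disjoint t e → (s ∪ t) \ e = t := by
      intro s t hs ht
      rw [Finset.union_sdiff_distrib, Finset.sdiff_eq_empty_iff_subset.mpr hs,
        Finset.sdiff_eq_self_iff_disjoint.mpr ht, Finset.empty_union]
    have hfst : p.1 = q.1 := by
      rw [← e1 p.1 p.2 hp1 d1, ← e1 q.1 q.2 hq1 d2, h]
    have hsnd : p.2 = q.2 := by
      rw [← e2 p.1 p.2 hp1 d1, ← e2 q.1 q.2 hq1 d2, h]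
    exact Prod.ext hfst hsnd
  -- S2 ⊆ S1
  have hS2 : P.image (fun p => p.1 ∪ p.2) ⊆ Δ.filter (fun A => ¬ e ⊆ A) := by
    intro A hA
    simp only [Finset.mem_image] at hA
    obtain ⟨p, hp, rfl⟩ := hA
    obtain ⟨hp1, hpne, hp2⟩ := hPmem p hp
    obtain ⟨-, hUe, hdisje⟩ := hLk _ hp2
    rw [Finset.mem_filter]
    constructor
    · exact hΔ.2 _ hUe _ (Finset.union_subset
        (hp1.trans Finset.subset_union_right) Finset.subset_union_left)
    · intro hsub
      apply hpne
      apply Finset.Subset.antisymm hp1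
      intro x hx
      rcases Finset.mem_union.mp (hsub hx) with h1 | h1
      · exact h1
      · exact absurd hx (Finset.disjoint_left.mp hdisje h1)
  have hsplit : stellarSubdiv Δ e v =
      Δ.filter (fun A => ¬ e ⊆ A) ∪ P.image (fun p => insert v (p.1 ∪ p.2)) := by
    rw [stellarSubdiv, Finset.union_eq_left.mpr hS2]
  have hdisj : Disjoint (Δ.filter (fun A => ¬ e ⊆ A))
      (P.image (fun p => insert v (p.1 ∪ p.2))) := by
    rw [Finset.disjoint_left]
    intro A hA hA'
    simp only [Finset.mem_image] at hA'
    obtain ⟨p, hp, rfl⟩ := hA'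
    exact hv _ (Finset.mem_filter.mp hA).1 (Finset.mem_insert_self v _)
  have hvnot : ∀ p ∈ P, v ∉ p.1 ∪ p.2 := by
    intro p hp
    obtain ⟨hp1, -, hp2⟩ := hPmem p hp
    simp only [Finset.mem_union]
    push_neg
    exact ⟨fun hx => hve (hp1 hx), hvL _ hp2⟩
  have hinj3 : ∀ p ∈ P, ∀ q ∈ P, insert v (p.1 ∪ p.2) = insert v (q.1 ∪ q.2) → p = q := by
    intro p hp q hq h
    apply hkey p hp q hq
    rw [← Finset.erase_insert (hvnot p hp), h, Finset.erase_insert (hvnot q hq)]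
  -- cardinality of new faces
  have hcardIns : ∀ B ⊆ e, ∀ A ∈ lk Δ e, (insert v (B ∪ A)).card = B.card + A.card + 1 := by
    intro B hB A hA
    have hdBA : Disjoint B A := Finset.disjoint_of_subset_left hB ((hLk A hA).2.2).symm
    have hvBA : v ∉ B ∪ A := by
      simp only [Finset.mem_union]
      push_neg
      exact ⟨fun hx => hve (hB hx), hvL _ hA⟩
    rw [Finset.card_insert_of_notMem hvBA, Finset.card_union_of_disjoint hdBA]
  -- the star part of Δ
  have himg : Δ.filter (fun A => e ⊆ A) = (lk Δ e).image (fun A => A ∪ e) := by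
    ext A
    simp only [Finset.mem_filter, Finset.mem_image]
    constructor
    · rintro ⟨hA, hsub⟩
      refine ⟨A \ e, ?_, Finset.sdiff_union_of_subset hsub⟩
      simp only [lk, Finset.mem_filter]
      exact ⟨hΔ.2 A hA _ Finset.sdiff_subset,
        by rwa [Finset.sdiff_union_of_subset hsub], Finset.sdiff_disjoint⟩
    · rintro ⟨L, hL, rfl⟩
      exact ⟨(hLk L hL).2.1, Finset.subset_union_right⟩
  have hinjU : ∀ x ∈ lk Δ e, ∀ y ∈ lk Δ e, x ∪ e = y ∪ e → x = y := by
    intro x hx y hy h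
    rw [← Finset.union_sdiff_cancel_right (hLk x hx).2.2,
      ← Finset.union_sdiff_cancel_right (hLk y hy).2.2, h]
  have hsplitΔ : hpoly d Δ = (∑ A ∈ Δ.filter (fun A => ¬ e ⊆ A), (X - 1) ^ (d - A.card))
      + hpoly (d - 2) (lk Δ e) := by
    rw [hpoly, ← Finset.sum_filter_add_sum_filter_not Δ (fun A => ¬ e ⊆ A)]
    congr 1
    have : Δ.filter (fun A => ¬¬ e ⊆ A) = Δ.filter (fun A => e ⊆ A) := by
      simp only [not_not]
    rw [this, himg, Finset.sum_image hinjU, hpoly]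
    refine Finset.sum_congr rfl fun A hA => ?_
    rw [hLcardU A hA]
    congr 1
    have := hLcard A hA
    omega
  -- enumerate the proper faces of e
  have hpow : e.powerset.filter (· ≠ e) = ({∅, {a}, {b}} : Finset (Finset V)) := by
    subst heab
    ext B
    simp only [Finset.mem_filter, Finset.mem_powerset, Finset.mem_insert,
      Finset.mem_singleton]
    constructor
    · rintro ⟨hsub, hne⟩
      by_cases haB : a ∈ B <;> by_cases hbB : b ∈ B
      · exact absurd (Finset.Subset.antisymm hsub (by
          intro x hx
          rcases Finset.mem_insert.mp hx with rfl | hx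
          · exact haB
          · rwa [Finset.mem_singleton.mp hx])) hne
      · right; left
        apply Finset.Subset.antisymm
        · intro x hx
          rcases Finset.mem_insert.mp (hsub hx) with rfl | h
          · exact Finset.mem_singleton_self _
          · exact absurd (Finset.mem_singleton.mp h ▸ hx) hbB
        · simpa using haB
      · right; right
        apply Finset.Subset.antisymm
        · intro x hx
          rcases Finset.mem_insert.mp (hsub hx) with rfl | h
          · exact absurd hx haB
          · exact h
        · simpa using hbB
      · left
        ext x
        simp only [Finset.notMem_empty, iff_false]
        intro hx
        rcases Finset.mem_insert.mp (hsub hx) with rfl | h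
        · exact haB hx
        · exact hbB (Finset.mem_singleton.mp h ▸ hx)
    · rintro (rfl | rfl | rfl)
      · exact ⟨Finset.empty_subset _, fun h => by
          simpa using congrArg (a ∈ ·) h.symm⟩
      · refine ⟨by simp, fun h => hab ?_⟩
        have : b ∈ ({a} : Finset V) := h ▸ Finset.mem_insert_of_mem (Finset.mem_singleton_self b)
        exact (Finset.mem_singleton.mp this).symm
      · refine ⟨by simp, fun h => hab ?_⟩
        have : a ∈ ({b} : Finset V) := h ▸ Finset.mem_insert_self a _
        exact Finset.mem_singleton.mp this
  have hae : a ∈ e := heab ▸ Finset.mem_insert_self a _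
  have hbe : b ∈ e := heab ▸ Finset.mem_insert_of_mem (Finset.mem_singleton_self b)
  -- main computation
  rw [hpoly, hsplit, Finset.sum_union hdisj, Finset.sum_image hinj3, hP,
    Finset.sum_product, hpow, hsplitΔ]
  rw [Finset.sum_insert (by
      simp only [Finset.mem_insert, Finset.mem_singleton]
      push_neg
      exact ⟨Ne.symm (Finset.singleton_ne_empty a), Ne.symm (Finset.singleton_ne_empty b)⟩),
    Finset.sum_insert (by
      simp only [Finset.mem_singleton]
      exact fun h => hab (Finset.singleton_injective h)),
    Finset.sum_singleton]
  have hmain :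
      (∑ A ∈ lk Δ e, (X - 1) ^ (d - (insert v ((∅ : Finset V) ∪ A)).card))
        + ((∑ A ∈ lk Δ e, (X - 1) ^ (d - (insert v ({a} ∪ A)).card))
          + (∑ A ∈ lk Δ e, (X - 1) ^ (d - (insert v ({b} ∪ A)).card)))
      = hpoly (d - 2) (lk Δ e) + X * hpoly (d - 2) (lk Δ e) := by
    rw [hpoly, Finset.mul_sum, ← Finset.sum_add_distrib, ← Finset.sum_add_distrib,
      ← Finset.sum_add_distrib]
    refine Finset.sum_congr rfl fun A hA => ?_
    have hc0 : (insert v ((∅ : Finset V) ∪ A)).card = A.card + 1 := by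
      rw [hcardIns ∅ (Finset.empty_subset _) A hA]; simp
    have hca : (insert v ({a} ∪ A)).card = A.card + 2 := by
      rw [hcardIns {a} (Finset.singleton_subset_iff.mpr hae) A hA]
      simp; omega
    have hcb : (insert v ({b} ∪ A)).card = A.card + 2 := by
      rw [hcardIns {b} (Finset.singleton_subset_iff.mpr hbe) A hA]
      simp; omega
    rw [hc0, hca, hcb]
    have hAd := hLcard A hA
    have e1 : d - (A.card + 1) = (d - 2 - A.card) + 1 := by omega
    have e2 : d - (A.card + 2) = d - 2 - A.card := by omega
    rw [e1, e2]
    ring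
  rw [add_assoc, hmain]
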